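/- arXiv:1709.02580 — 3 statements merged into one kernel-verified Lean document; each statement's English description precedes it below -/
import Mathlib

section
/- Let p be an odd prime, n a positive integer, and S a totally isotropic subspace of F_p^n × F_p^n. Let P = ∑_{(a,b)∈S} ζ^{a·b} U_a V_b, an operator on the space of complex-valued functions on F_p^n. Then 𝒩 P 𝒩⁻¹ = P if and only if S is simultaneously negacyclic, i.e., (a,b) ∈ S implies (Na, Nb) ∈ S. -/
open Complex

/-- The negacyclic shift `N : F_p^n → F_p^n`,
`(u_0, …, u_{n−1}) ↦ (−u_{n−1}, u_0, …, u_{n−2})`. -/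
def negashift (p n : ℕ) (hn : 0 < n) (u : Fin n → ZMod p) : Fin n → ZMod p :=
  fun i => if (i : ℕ) = 0 then -u ⟨n - 1, Nat.sub_lt hn Nat.one_pos⟩
           else u ⟨(i : ℕ) - 1, Nat.lt_of_le_of_lt (Nat.sub_le _ _) i.isLt⟩

/-- The inverse of the negacyclic shift:
`(u_0, …, u_{n−1}) ↦ (u_1, …, u_{n−1}, −u_0)`. -/
def negashiftInv (p n : ℕ) (hn : 0 < n) (u : Fin n → ZMod p) : Fin n → ZMod p :=
  fun i => if h : (i : ℕ) + 1 < n then u ⟨(i : ℕ) + 1, h⟩ else -u ⟨0, hn⟩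

/-- The symplectic inner product on `F_p^n × F_p^n`. -/
def sympForm (p n : ℕ) (u v : (Fin n → ZMod p) × (Fin n → ZMod p)) : ZMod p :=
  (∑ j, u.1 j * v.2 j) - (∑ j, u.2 j * v.1 j)

/-- `ζ^c = exp(2πi·c/p)` for `c ∈ F_p`, with `ζ = exp(2πi/p)`. -/
noncomputable def zetaPow (p : ℕ) (c : ZMod p) : ℂ :=
  Complex.exp (2 * Real.pi * Complex.I * (c.val : ℂ) / (p : ℂ))

/-- The dot product `a·b = ∑_j a_j b_j` on `F_p^n`. -/
def dotp (p n : ℕ) (a b : Fin n → ZMod p) : ZMod p := ∑ j, a j * b j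

/-- The Weyl operator `U_a`: `(U_a ψ)(x) = ψ(x − a)`. -/
def Uop (p n : ℕ) (a : Fin n → ZMod p) (ψ : (Fin n → ZMod p) → ℂ) :
    (Fin n → ZMod p) → ℂ := fun x => ψ (x - a)

/-- The Weyl operator `V_b`: `(V_b ψ)(x) = ζ^{b·x} ψ(x)`. -/
noncomputable def Vop (p n : ℕ) (b : Fin n → ZMod p) (ψ : (Fin n → ZMod p) → ℂ) :
    (Fin n → ZMod p) → ℂ := fun x => zetaPow p (dotp p n b x) * ψ x

/-- The projection-like operator `P = ∑_{(a,b)∈S} ζ^{a·b} U_a V_b`. -/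
noncomputable def Pop (p n : ℕ) (S : Set ((Fin n → ZMod p) × (Fin n → ZMod p)))
    (ψ : (Fin n → ZMod p) → ℂ) : (Fin n → ZMod p) → ℂ :=
  fun x => ∑ᶠ ab ∈ S, zetaPow p (dotp p n ab.1 ab.2) * Uop p n ab.1 (Vop p n ab.2 ψ) x

/-! ### Auxiliary lemmas -/

section aux
variable (p n : ℕ) (hn : 0 < n)

lemma negashift_negashiftInv (u : Fin n → ZMod p) :
    negashift p n hn (negashiftInv p n hn u) = u := by
  funext i
  unfold negashift negashiftInv
  rcases Nat.eq_zero_or_pos (i : ℕ) with h0 | h0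
  · have : ¬ (n - 1 + 1 < n) := by omega
    simp [h0, this]
    congr 1
    exact Fin.ext h0.symm
  · have hne : (i : ℕ) ≠ 0 := h0.ne'
    have hlt : (i : ℕ) - 1 + 1 < n := by have := i.isLt; omega
    simp [hne, hlt]
    congr 1
    exact Fin.ext (by simp; omega)

lemma negashiftInv_negashift (u : Fin n → ZMod p) :
    negashiftInv p n hn (negashift p n hn u) = u := by
  funext i
  unfold negashift negashiftInv
  by_cases h : (i : ℕ) + 1 < n
  · have : ((i:ℕ) + 1) ≠ 0 := by omega
    simp [h, this]
  · have hi : (i : ℕ) = n - 1 := by have := i.isLt; omega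
    simp [h]
    congr 1
    exact Fin.ext hi.symm

lemma negashift_injective : Function.Injective (negashift p n hn) :=
  Function.LeftInverse.injective (negashiftInv_negashift p n hn)

lemma negashift_sub (u v : Fin n → ZMod p) :
    negashift p n hn (u - v) = negashift p n hn u - negashift p n hn v := by
  funext i
  unfold negashift
  by_cases h : (i : ℕ) = 0 <;> simp [h] <;> ring

lemma dotp_comm (a b : Fin n → ZMod p) : dotp p n a b = dotp p n b a := by
  unfold dotp; exact Finset.sum_congr rfl fun j _ => mul_comm _ _

lemma dotp_sub_right (a b c : Fin n → ZMod p) :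
    dotp p n a (b - c) = dotp p n a b - dotp p n a c := by
  unfold dotp
  rw [← Finset.sum_sub_distrib]
  exact Finset.sum_congr rfl fun j _ => by simp [mul_sub]

lemma dotp_sub_left (a b c : Fin n → ZMod p) :
    dotp p n (a - b) c = dotp p n a c - dotp p n b c := by
  unfold dotp
  rw [← Finset.sum_sub_distrib]
  exact Finset.sum_congr rfl fun j _ => by simp [sub_mul]

lemma dotp_negashift (a b : Fin n → ZMod p) :
    dotp p n (negashift p n hn a) (negashift p n hn b) = dotp p n a b := by
  obtain ⟨m, rfl⟩ : ∃ m, n = m + 1 := ⟨n - 1, by omega⟩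
  unfold dotp
  rw [Fin.sum_univ_succ, Fin.sum_univ_castSucc (f := fun j => a j * b j)]
  have h0 : ∀ u : Fin (m+1) → ZMod p, negashift p (m+1) hn u 0 = -u ⟨m, by omega⟩ := by
    intro u; simp [negashift]
  have hs : ∀ (u : Fin (m+1) → ZMod p) (i : Fin m),
      negashift p (m+1) hn u i.succ = u i.castSucc := by
    intro u i
    have h1 : ((i.succ : Fin (m+1)) : ℕ) ≠ 0 := by simp
    simp only [negashift, h1, if_false]
    congr 1
  rw [h0, h0]
  simp only [hs]
  rw [neg_mul_neg, add_comm]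
  rfl

lemma dotp_negashiftInv (b x : Fin n → ZMod p) :
    dotp p n b (negashiftInv p n hn x) = dotp p n (negashift p n hn b) x := by
  conv_lhs => rw [← dotp_negashift p n hn, negashift_negashiftInv]

end aux

section zeta
variable (p : ℕ) [Fact p.Prime]

lemma zetaPow_eq_pow (c : ZMod p) :
    zetaPow p c = Complex.exp (2 * Real.pi * Complex.I / (p : ℂ)) ^ c.val := by
  rw [zetaPow, ← Complex.exp_nat_mul]
  ring_nf

lemma zeta_pow_p : Complex.exp (2 * Real.pi * Complex.I / (p : ℂ)) ^ p = 1 := by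
  have hp : (p : ℂ) ≠ 0 := Nat.cast_ne_zero.mpr (Fact.out : p.Prime).ne_zero
  rw [← Complex.exp_nat_mul]
  rw [show (p : ℂ) * (2 * Real.pi * Complex.I / (p : ℂ)) = 2 * Real.pi * Complex.I by
    field_simp]
  exact_mod_cast Complex.exp_two_pi_mul_I

lemma pow_mod_eq (z : ℂ) (hz : z ^ p = 1) (m : ℕ) : z ^ (m % p) = z ^ m := by
  conv_rhs => rw [← Nat.mod_add_div m p]
  rw [pow_add, pow_mul, hz, one_pow, mul_one]

lemma zetaPow_add (c d : ZMod p) : zetaPow p (c + d) = zetaPow p c * zetaPow p d := by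
  haveI : NeZero p := ⟨(Fact.out : p.Prime).ne_zero⟩
  rw [zetaPow_eq_pow, zetaPow_eq_pow, zetaPow_eq_pow, ZMod.val_add,
    pow_mod_eq p _ (zeta_pow_p p), pow_add]

lemma zetaPow_zero : zetaPow p 0 = 1 := by
  haveI : NeZero p := ⟨(Fact.out : p.Prime).ne_zero⟩
  rw [zetaPow_eq_pow, ZMod.val_zero, pow_zero]

lemma zetaPow_ne_zero (c : ZMod p) : zetaPow p c ≠ 0 := Complex.exp_ne_zero _

lemma zetaPow_one_ne_one : zetaPow p 1 ≠ 1 := by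
  haveI : NeZero p := ⟨(Fact.out : p.Prime).ne_zero⟩
  have hp1 : 1 < p := (Fact.out : p.Prime).one_lt
  rw [zetaPow_eq_pow, ZMod.val_one, pow_one]
  intro h
  rw [Complex.exp_eq_one_iff] at h
  obtain ⟨k, hk⟩ := h
  have hp : (p : ℂ) ≠ 0 := Nat.cast_ne_zero.mpr (by omega)
  have hpi : (2 * Real.pi * Complex.I : ℂ) ≠ 0 := by
    simp [Complex.I_ne_zero, Real.pi_ne_zero]
  have h3 := congrArg (fun z => z * (p : ℂ)) hk
  rw [div_mul_cancel₀ _ hp] at h3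
  have h4 : (1 : ℂ) = (k : ℂ) * p := mul_left_cancel₀ hpi
    (by rw [mul_one]; linear_combination h3)
  have h5 : (1 : ℤ) = k * p := by exact_mod_cast h4
  have h6 : (p : ℤ) ∣ 1 := ⟨k, by linarith [h5, mul_comm k (p:ℤ)]⟩
  have := Int.le_of_dvd one_pos h6
  omega
end zeta

section chars
variable (p n : ℕ) [Fact p.Prime]

lemma char_sum (c : Fin n → ZMod p) (hc : c ≠ 0) :
    ∑ x : Fin n → ZMod p, zetaPow p (dotp p n c x) = 0 := by
  haveI : NeZero p := ⟨(Fact.out : p.Prime).ne_zero⟩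
  obtain ⟨j, hj⟩ : ∃ j, c j ≠ 0 := by
    by_contra h
    push_neg at h
    exact hc (funext h)
  set v : Fin n → ZMod p := Function.update (0 : Fin n → ZMod p) j (c j)⁻¹ with hv
  have hdv : dotp p n c v = 1 := by
    unfold dotp
    rw [Finset.sum_eq_single j]
    · simp [hv, Function.update_self, ZMod.mul_inv_of_unit, mul_inv_cancel₀ hj]
    · intro i _ hij
      simp [hv, Function.update_of_ne hij]
    · simp
  have key : ∑ x : Fin n → ZMod p, zetaPow p (dotp p n c x)
      = zetaPow p 1 * ∑ x : Fin n → ZMod p, zetaPow p (dotp p n c x) := by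
    rw [Finset.mul_sum]
    apply Fintype.sum_bijective (fun x => x - v) (Equiv.subRight v).bijective
    intro x
    rw [dotp_sub_right, hdv, ← zetaPow_add]
    congr 1
    ring
  have h2 : (zetaPow p 1 - 1) * ∑ x : Fin n → ZMod p, zetaPow p (dotp p n c x) = 0 := by
    rw [sub_mul, one_mul, ← key, sub_self]
  rcases mul_eq_zero.mp h2 with h | h
  · exact absurd (by linear_combination h) (zetaPow_one_ne_one p)
  · exact h

lemma char_orth (b b0 : Fin n → ZMod p) :
    ∑ x : Fin n → ZMod p, zetaPow p (dotp p n b x) * (zetaPow p (dotp p n b0 x))⁻¹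
      = if b = b0 then ((Fintype.card (Fin n → ZMod p) : ℂ)) else 0 := by
  haveI : NeZero p := ⟨(Fact.out : p.Prime).ne_zero⟩
  have hterm : ∀ x, zetaPow p (dotp p n b x) * (zetaPow p (dotp p n b0 x))⁻¹
      = zetaPow p (dotp p n (b - b0) x) := by
    intro x
    rw [eq_comm, eq_mul_inv_iff_mul_eq₀ (zetaPow_ne_zero p _), ← zetaPow_add,
      dotp_sub_left, sub_add_cancel]
  simp only [hterm]
  by_cases h : b = b0
  · subst h
    simp only [sub_self]
    have : ∀ x : Fin n → ZMod p, dotp p n (0 : Fin n → ZMod p) x = 0 := by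
      intro x; unfold dotp; simp
    simp [this, zetaPow_zero, if_pos]
  · rw [if_neg h]
    exact char_sum p n (b - b0) (sub_ne_zero_of_ne h)

/-- Linear independence of the Weyl operators (in the form needed here). -/
lemma weyl_indep (c : ((Fin n → ZMod p) × (Fin n → ZMod p)) → ℂ)
    (h : ∀ (ψ : (Fin n → ZMod p) → ℂ) (x : Fin n → ZMod p),
      ∑ ab : (Fin n → ZMod p) × (Fin n → ZMod p),
        c ab * (zetaPow p (dotp p n ab.2 x) * ψ (x - ab.1)) = 0) :
    ∀ ab, c ab = 0 := by
  classical
  haveI : NeZero p := ⟨(Fact.out : p.Prime).ne_zero⟩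
  rintro ⟨a0, b0⟩
  have h1 : ∀ x : Fin n → ZMod p,
      ∑ b : Fin n → ZMod p, c (a0, b) * zetaPow p (dotp p n b x) = 0 := by
    intro x
    have hh := h (fun y => if y = x - a0 then 1 else 0) x
    rw [Fintype.sum_prod_type, Finset.sum_comm] at hh
    dsimp only at hh
    have hsimp : ∀ b : Fin n → ZMod p, ∑ a : Fin n → ZMod p,
        c (a, b) * (zetaPow p (dotp p n b x) * (if x - a = x - a0 then (1:ℂ) else 0))
        = c (a0, b) * zetaPow p (dotp p n b x) := by
      intro b
      rw [Finset.sum_eq_single a0]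
      · simp
      · intro a _ ha
        have hne : x - a ≠ x - a0 := fun hcon => ha (sub_right_injective hcon)
        simp [hne]
      · simp
    rw [Finset.sum_congr rfl (fun b _ => hsimp b)] at hh
    exact hh
  have h3 : ∑ b : Fin n → ZMod p, ∑ x : Fin n → ZMod p,
      (c (a0, b) * zetaPow p (dotp p n b x)) * (zetaPow p (dotp p n b0 x))⁻¹ = 0 := by
    rw [Finset.sum_comm]
    apply Finset.sum_eq_zero
    intro x _
    rw [← Finset.sum_mul, h1 x, zero_mul]
  have h4 : ∀ b : Fin n → ZMod p, ∑ x : Fin n → ZMod p,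
      (c (a0, b) * zetaPow p (dotp p n b x)) * (zetaPow p (dotp p n b0 x))⁻¹
      = c (a0, b) * (if b = b0 then ((Fintype.card (Fin n → ZMod p)) : ℂ) else 0) := by
    intro b
    rw [← char_orth p n b b0, Finset.mul_sum]
    exact Finset.sum_congr rfl fun x _ => by ring
  rw [Finset.sum_congr rfl (fun b _ => h4 b)] at h3
  simp only [mul_ite, mul_zero, Finset.sum_ite_eq', Finset.mem_univ, if_true] at h3
  have hcard : ((Fintype.card (Fin n → ZMod p)) : ℂ) ≠ 0 :=
    Nat.cast_ne_zero.mpr Fintype.card_ne_zero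
  exact (mul_eq_zero.mp h3).resolve_right hcard

end chars

/-- `𝒩 P 𝒩⁻¹ = P` iff `S` is simultaneously negacyclic.  Here
`(𝒩ψ)(x) = ψ(N⁻¹x)`, so `(𝒩 P 𝒩⁻¹ ψ)(x) = (P (ψ ∘ N))(N⁻¹ x)`. -/
theorem stmt2 (p n : ℕ) [Fact p.Prime] (hp : Odd p) (hn : 0 < n)
    (S : Submodule (ZMod p) ((Fin n → ZMod p) × (Fin n → ZMod p)))
    (hiso : ∀ u ∈ S, ∀ v ∈ S, sympForm p n u v = 0) :
    (∀ ψ : (Fin n → ZMod p) → ℂ, ∀ x : Fin n → ZMod p,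
        Pop p n (S : Set ((Fin n → ZMod p) × (Fin n → ZMod p)))
          (fun y => ψ (negashift p n hn y)) (negashiftInv p n hn x)
          = Pop p n (S : Set ((Fin n → ZMod p) × (Fin n → ZMod p))) ψ x)
      ↔ ∀ ab ∈ S, (negashift p n hn ab.1, negashift p n hn ab.2) ∈ S := by
  classical
  haveI : NeZero p := ⟨(Fact.out : p.Prime).ne_zero⟩
  have hSfin : (S : Set ((Fin n → ZMod p) × (Fin n → ZMod p))).Finite := Set.toFinite _
  set T : Finset ((Fin n → ZMod p) × (Fin n → ZMod p)) := hSfin.toFinset with hT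
  have hmemT : ∀ ab, ab ∈ T ↔ ab ∈ S := fun ab => hSfin.mem_toFinset
  set NN : ((Fin n → ZMod p) × (Fin n → ZMod p)) → ((Fin n → ZMod p) × (Fin n → ZMod p)) :=
    fun ab => (negashift p n hn ab.1, negashift p n hn ab.2) with hNN
  have hNinj : Function.Injective NN := by
    intro a b hab
    have h1 := congrArg Prod.fst hab
    have h2 := congrArg Prod.snd hab
    exact Prod.ext (negashift_injective p n hn h1) (negashift_injective p n hn h2)
  have key1 : ∀ (ψ : (Fin n → ZMod p) → ℂ) (x : Fin n → ZMod p),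
      Pop p n (S : Set ((Fin n → ZMod p) × (Fin n → ZMod p))) ψ x
      = ∑ ab ∈ T, zetaPow p (dotp p n ab.2 x) * ψ (x - ab.1) := by
    intro ψ x
    show (∑ᶠ ab ∈ (S : Set ((Fin n → ZMod p) × (Fin n → ZMod p))),
      zetaPow p (dotp p n ab.1 ab.2) * Uop p n ab.1 (Vop p n ab.2 ψ) x) = _
    rw [finsum_mem_eq_finite_toFinset_sum _ hSfin]
    apply Finset.sum_congr rfl
    intro ab _
    show zetaPow p (dotp p n ab.1 ab.2) * (zetaPow p (dotp p n ab.2 (x - ab.1)) * ψ (x - ab.1)) = _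
    rw [← mul_assoc, ← zetaPow_add]
    congr 2
    rw [dotp_sub_right, dotp_comm p n ab.1 ab.2]
    ring
  have key2 : ∀ (ψ : (Fin n → ZMod p) → ℂ) (x : Fin n → ZMod p),
      Pop p n (S : Set ((Fin n → ZMod p) × (Fin n → ZMod p)))
        (fun y => ψ (negashift p n hn y)) (negashiftInv p n hn x)
      = ∑ ab ∈ T.image NN, zetaPow p (dotp p n ab.2 x) * ψ (x - ab.1) := by
    intro ψ x
    rw [key1, Finset.sum_image (fun a _ b _ hab => hNinj hab)]
    apply Finset.sum_congr rfl
    intro ab _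
    show zetaPow p (dotp p n ab.2 (negashiftInv p n hn x))
        * ψ (negashift p n hn (negashiftInv p n hn x - ab.1)) = _
    rw [dotp_negashiftInv, negashift_sub, negashift_negashiftInv]
  constructor
  · intro h ab hab
    have hTT : T.image NN = T := by
      have hcoef : ∀ cd, ((if cd ∈ T.image NN then (1:ℂ) else 0)
          - (if cd ∈ T then 1 else 0)) = 0 := by
        apply weyl_indep p n
        intro ψ x
        have hx := h ψ x
        rw [key2, key1] at hx
        have hext : ∀ (s : Finset ((Fin n → ZMod p) × (Fin n → ZMod p))),
            ∑ ab ∈ s, zetaPow p (dotp p n ab.2 x) * ψ (x - ab.1)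
            = ∑ ab : (Fin n → ZMod p) × (Fin n → ZMod p),
              (if ab ∈ s then (1:ℂ) else 0) * (zetaPow p (dotp p n ab.2 x) * ψ (x - ab.1)) := by
          intro s
          rw [eq_comm]
          simp only [ite_mul, one_mul, zero_mul, Finset.sum_ite_mem, Finset.univ_inter]
        simp only [sub_mul, Finset.sum_sub_distrib, ← hext, hx, sub_self]
      apply Finset.ext
      intro cd
      have hc := hcoef cd
      by_cases h1 : cd ∈ T.image NN <;> by_cases h2 : cd ∈ T <;>
        simp [h1, h2] at hc ⊢
    have : NN ab ∈ T.image NN := Finset.mem_image_of_mem _ ((hmemT ab).mpr hab)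
    rw [hTT] at this
    exact (hmemT _).mp this
  · intro h ψ x
    have himg : T.image NN ⊆ T := by
      intro cd hcd
      obtain ⟨ab', hab', rfl⟩ := Finset.mem_image.mp hcd
      exact (hmemT _).mpr (h ab' ((hmemT ab').mp hab'))
    have hcard : (T.image NN).card = T.card := Finset.card_image_of_injective T hNinj
    have hTT : T.image NN = T := Finset.eq_of_subset_of_card_le himg hcard.ge
    rw [key2, key1, hTT]
end

section
/- Let p be an odd prime, let η ∈ F_{p^2} be a root of an irreducible quadratic X² + c₁X + c₀ over F_p (so F_{p^2} = F_p(η)), and let Φ : F_p^n × F_p^n → F_{p^2}^n be the F_p-linear bijection (a,b) ↦ a + ηb (coordinatewise), where F_{p^2}^n is further identified with R(η) = F_{p^2}[X]/(X^n+1). Let S be a totally isotropic simultaneously negacyclic subspace of F_p^n × F_p^n such that Φ(S) is an F_{p^2}-linear subspace of F_{p^2}^n. Then Φ(S) is an ideal of R(η), and moreover Φ(S^⊥) is also an ideal of R(η), where S^⊥ is the dual of S with respect to the symplectic inner product. -/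
open Polynomial

/-- The ring `R(η) = F_{p²}[X]/(X^n + 1)`. -/
abbrev Rpn2 (p n : ℕ) [Fact p.Prime] :=
  Polynomial (GaloisField p 2) ⧸ Ideal.span {(X : Polynomial (GaloisField p 2)) ^ n + 1}

/-- The quotient map `F_{p²}[X] → R(η)`. -/
noncomputable def mkR2 (p n : ℕ) [Fact p.Prime] : Polynomial (GaloisField p 2) →+* Rpn2 p n :=
  Ideal.Quotient.mk (Ideal.span {(X : Polynomial (GaloisField p 2)) ^ n + 1})

/-- The identification `Φ : F_p^n × F_p^n → R(η)`, `(a,b) ↦ a + ηb`. -/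
noncomputable def PhiMap (p n : ℕ) [Fact p.Prime] (η : GaloisField p 2)
    (ab : (Fin n → ZMod p) × (Fin n → ZMod p)) : Rpn2 p n :=
  mkR2 p n (∑ j : Fin n,
    C (algebraMap (ZMod p) (GaloisField p 2) (ab.1 j)
        + η * algebraMap (ZMod p) (GaloisField p 2) (ab.2 j)) * X ^ (j : ℕ))


set_option synthInstance.maxHeartbeats 1000000
set_option maxHeartbeats 1000000


lemma negashift_zero (p m : ℕ) (hn : 0 < m + 1) (u : Fin (m+1) → ZMod p) :
    negashift p (m+1) hn u 0 = -u (Fin.last m) := by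
  simp [negashift, Fin.last]

section
variable (p n : ℕ) [Fact p.Prime] (η : GaloisField p 2)

lemma mkR2_C (c : GaloisField p 2) :
    mkR2 p n (C c) = algebraMap (GaloisField p 2) (Rpn2 p n) c := by
  rw [← Polynomial.algebraMap_eq]
  exact Ideal.Quotient.mk_algebraMap _ _ _


lemma exists_ideal (T : Set (Rpn2 p n)) (h0 : (0 : Rpn2 p n) ∈ T)
    (hadd : ∀ x ∈ T, ∀ y ∈ T, x + y ∈ T)
    (hsmul : ∀ c : GaloisField p 2, ∀ x ∈ T, c • x ∈ T)
    (hX : ∀ x ∈ T, mkR2 p n X * x ∈ T) :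
    ∃ I : Ideal (Rpn2 p n), T = ↑I := by
  refine ⟨{ carrier := T, add_mem' := fun ha hb => hadd _ ha _ hb, zero_mem' := h0,
            smul_mem' := ?_ }, rfl⟩
  intro r x hx
  obtain ⟨f, rfl⟩ := Ideal.Quotient.mk_surjective r
  rw [smul_eq_mul]
  induction f using Polynomial.induction_on with
  | C a =>
      have : (Ideal.Quotient.mk _ (C a) : Rpn2 p n) * x = a • x := by
        rw [show (Ideal.Quotient.mk _ (C a) : Rpn2 p n) = mkR2 p n (C a) from rfl,
          mkR2_C, ← Algebra.smul_def]
      rw [this]; exact hsmul a x hx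
  | add f g hf hg =>
      rw [map_add, add_mul]; exact hadd _ hf _ hg
  | monomial k a ih =>
      have : (Ideal.Quotient.mk _ (C a * X ^ (k+1)) : Rpn2 p n)
          = mkR2 p n X * Ideal.Quotient.mk _ (C a * X ^ k) := by
        rw [show mkR2 p n X = Ideal.Quotient.mk _ X from rfl, ← map_mul]
        ring_nf
      rw [this, mul_assoc]
      exact hX _ ih

lemma smul_mkR2 (c : GaloisField p 2) (f : Polynomial (GaloisField p 2)) :
    c • mkR2 p n f = mkR2 p n (C c * f) := by
  have : c • mkR2 p n f = mkR2 p n (c • f) := rfl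
  rw [this, Polynomial.smul_eq_C_mul]

lemma PhiMap_add (u v : (Fin n → ZMod p) × (Fin n → ZMod p)) :
    PhiMap p n η (u + v) = PhiMap p n η u + PhiMap p n η v := by
  unfold PhiMap
  rw [← map_add, ← Finset.sum_add_distrib]
  congr 1
  refine Finset.sum_congr rfl fun j _ => ?_
  rw [← add_mul, ← C_add]
  refine congrArg (fun z => C z * X ^ (j:ℕ)) ?_
  simp only [Prod.fst_add, Pi.add_apply, Prod.snd_add, map_add]
  ring

lemma PhiMap_sub (u v : (Fin n → ZMod p) × (Fin n → ZMod p)) :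
    PhiMap p n η (u - v) = PhiMap p n η u - PhiMap p n η v := by
  unfold PhiMap
  rw [← map_sub, ← Finset.sum_sub_distrib]
  congr 1
  refine Finset.sum_congr rfl fun j _ => ?_
  rw [← sub_mul, ← C_sub]
  refine congrArg (fun z => C z * X ^ (j:ℕ)) ?_
  simp only [Prod.fst_sub, Pi.sub_apply, Prod.snd_sub, map_sub]
  ring

lemma PhiMap_zero : PhiMap p n η 0 = 0 := by
  simp [PhiMap]

lemma PhiMap_smulZ (a : ZMod p) (u : (Fin n → ZMod p) × (Fin n → ZMod p)) :
    PhiMap p n η (a • u) = algebraMap (ZMod p) (GaloisField p 2) a • PhiMap p n η u := by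
  unfold PhiMap
  rw [smul_mkR2, Finset.mul_sum]
  refine congrArg _ (Finset.sum_congr rfl fun j _ => ?_)
  rw [← mul_assoc, ← C_mul]
  refine congrArg (fun z => C z * X ^ (j:ℕ)) ?_
  simp only [Prod.smul_fst, Prod.smul_snd, Pi.smul_apply, smul_eq_mul, map_mul]
  ring

lemma PhiMap_eta (c₀ c₁ : ZMod p)
    (hη : η^2 + algebraMap (ZMod p) (GaloisField p 2) c₁ * η
        + algebraMap (ZMod p) (GaloisField p 2) c₀ = 0)
    (u : (Fin n → ZMod p) × (Fin n → ZMod p)) :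
    η • PhiMap p n η u
      = PhiMap p n η (fun j => -(c₀ * u.2 j), fun j => u.1 j - c₁ * u.2 j) := by
  unfold PhiMap
  rw [smul_mkR2, Finset.mul_sum]
  refine congrArg _ (Finset.sum_congr rfl fun j _ => ?_)
  rw [← mul_assoc, ← C_mul]
  refine congrArg (fun z => C z * X ^ (j:ℕ)) ?_
  simp only [map_neg, map_sub, map_mul]
  linear_combination (algebraMap (ZMod p) (GaloisField p 2) (u.2 j)) * hη

lemma keyX (m : ℕ) (e : Fin (m+1) → GaloisField p 2) :
    mkR2 p (m+1) (X * ∑ j : Fin (m+1), C (e j) * X ^ (j:ℕ))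
      = mkR2 p (m+1) (∑ i : Fin (m+1),
          C (if (i:ℕ) = 0 then -(e (Fin.last m)) else e ⟨(i:ℕ)-1, by omega⟩) * X ^ (i:ℕ)) := by
  show Ideal.Quotient.mk _ _ = Ideal.Quotient.mk _ _
  rw [Ideal.Quotient.eq, Ideal.mem_span_singleton]
  refine ⟨C (e (Fin.last m)), ?_⟩
  rw [Finset.mul_sum, Fin.sum_univ_castSucc (f := fun j => X * (C (e j) * X ^ (j:ℕ))),
      Fin.sum_univ_succ (f := fun i : Fin (m+1) =>
        C (if (i:ℕ) = 0 then -(e (Fin.last m)) else e ⟨(i:ℕ)-1, by omega⟩) * X ^ (i:ℕ))]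
  have h1 : ∑ i : Fin m,
      C (if ((i.succ : Fin (m+1)):ℕ) = 0 then -(e (Fin.last m))
          else e ⟨((i.succ : Fin (m+1)):ℕ)-1, by omega⟩) * X ^ ((i.succ : Fin (m+1)):ℕ)
      = ∑ j : Fin m, X * (C (e j.castSucc) * X ^ ((j.castSucc : Fin (m+1)):ℕ)) := by
    refine Finset.sum_congr rfl fun i _ => ?_
    rw [if_neg (by simp)]
    have hidx : (⟨((i.succ : Fin (m+1)):ℕ) - 1, by omega⟩ : Fin (m+1)) = i.castSucc := by
      apply Fin.ext; simp
    rw [hidx, Fin.val_succ, Fin.coe_castSucc]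
    ring
  rw [h1]
  simp only [Fin.val_zero, Fin.val_last, pow_zero, eq_self_iff_true, if_true, map_neg]
  ring

lemma PhiMap_X (hn : 0 < n) (u : (Fin n → ZMod p) × (Fin n → ZMod p)) :
    mkR2 p n X * PhiMap p n η u
      = PhiMap p n η (negashift p n hn u.1, negashift p n hn u.2) := by
  obtain ⟨m, rfl⟩ : ∃ m, n = m + 1 := ⟨n - 1, (Nat.succ_pred_eq_of_pos hn).symm⟩
  have hco : ∀ i : Fin (m+1),
      algebraMap (ZMod p) (GaloisField p 2) (negashift p (m+1) hn u.1 i)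
        + η * algebraMap (ZMod p) (GaloisField p 2) (negashift p (m+1) hn u.2 i)
      = if (i:ℕ) = 0
        then -(algebraMap (ZMod p) (GaloisField p 2) (u.1 (Fin.last m))
          + η * algebraMap (ZMod p) (GaloisField p 2) (u.2 (Fin.last m)))
        else algebraMap (ZMod p) (GaloisField p 2) (u.1 ⟨(i:ℕ)-1, by omega⟩)
          + η * algebraMap (ZMod p) (GaloisField p 2) (u.2 ⟨(i:ℕ)-1, by omega⟩) := by
    intro i
    by_cases h : (i:ℕ) = 0
    · have h0 : i = 0 := Fin.ext h
      subst h0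
      rw [if_pos h, negashift_zero, negashift_zero]
      simp only [map_neg]
      ring
    · rw [if_neg h]
      simp only [negashift, h, if_false]
  rw [PhiMap, PhiMap, ← map_mul]
  have hsum : (∑ x : Fin (m+1),
      C (algebraMap (ZMod p) (GaloisField p 2)
            ((negashift p (m+1) hn u.1, negashift p (m+1) hn u.2).1 x)
          + η * algebraMap (ZMod p) (GaloisField p 2)
            ((negashift p (m+1) hn u.1, negashift p (m+1) hn u.2).2 x)) * X ^ (x:ℕ))
      = ∑ i : Fin (m+1), C (if (i:ℕ) = 0
        then -(algebraMap (ZMod p) (GaloisField p 2) (u.1 (Fin.last m))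
          + η * algebraMap (ZMod p) (GaloisField p 2) (u.2 (Fin.last m)))
        else algebraMap (ZMod p) (GaloisField p 2) (u.1 ⟨(i:ℕ)-1, by omega⟩)
          + η * algebraMap (ZMod p) (GaloisField p 2) (u.2 ⟨(i:ℕ)-1, by omega⟩)) * X ^ (i:ℕ) :=
    Finset.sum_congr rfl fun i _ => by rw [hco i]
  rw [hsum]
  exact keyX p m (fun j => algebraMap (ZMod p) (GaloisField p 2) (u.1 j)
    + η * algebraMap (ZMod p) (GaloisField p 2) (u.2 j))

lemma hli_of_irred (c₀ c₁ : ZMod p) (hcirr : Irreducible (X ^ 2 + C c₁ * X + C c₀))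
    (hroot : aeval η (X ^ 2 + C c₁ * X + C c₀) = 0) :
    ∀ a b : ZMod p, algebraMap (ZMod p) (GaloisField p 2) a
      + η * algebraMap (ZMod p) (GaloisField p 2) b = 0 → a = 0 ∧ b = 0 := by
  intro a b hab
  by_cases hb : b = 0
  · subst hb
    simp only [map_zero, mul_zero, add_zero] at hab
    exact ⟨(algebraMap (ZMod p) (GaloisField p 2)).injective (by simpa using hab), rfl⟩
  · exfalso
    have hb' : algebraMap (ZMod p) (GaloisField p 2) b ≠ 0 :=
      fun h => hb ((algebraMap (ZMod p) (GaloisField p 2)).injective (by simpa using h))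
    have hη : η = algebraMap (ZMod p) (GaloisField p 2) (-(a/b)) := by
      rw [map_neg, map_div₀]
      field_simp
      linear_combination hab
    set t : ZMod p := -(a/b) with ht
    have hroot2 : t^2 + c₁ * t + c₀ = 0 := by
      rw [map_add, map_add, map_pow, aeval_X, map_mul, aeval_C, aeval_C, hη] at hroot
      apply (algebraMap (ZMod p) (GaloisField p 2)).injective
      simpa [map_add, map_mul, map_pow] using hroot
    have hdvd : (X - C t) ∣ (X^2 + C c₁ * X + C c₀) := by
      apply dvd_iff_isRoot.mpr
      simp [IsRoot, eval_add, eval_pow, eval_mul, hroot2]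
    obtain ⟨r, hr⟩ := hdvd
    rcases hcirr.isUnit_or_isUnit hr with h | h
    · exact (Polynomial.not_isUnit_X_sub_C t) h
    · have h2 : (X^2 + C c₁ * X + C c₀ : Polynomial (ZMod p)).natDegree = 2 := by
        compute_degree!
      have hd := congrArg Polynomial.natDegree hr
      rw [natDegree_mul (X_sub_C_ne_zero t) h.ne_zero, natDegree_X_sub_C,
        natDegree_eq_zero_of_isUnit h, h2] at hd
      omega

lemma eta_spans (c₀ c₁ : ZMod p) (hcirr : Irreducible (X ^ 2 + C c₁ * X + C c₀))
    (hroot : aeval η (X ^ 2 + C c₁ * X + C c₀) = 0) :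
    ∀ c : GaloisField p 2, ∃ a b : ZMod p,
      c = algebraMap (ZMod p) (GaloisField p 2) a
        + η * algebraMap (ZMod p) (GaloisField p 2) b := by
  have hli := hli_of_irred p η c₀ c₁ hcirr hroot
  have li : LinearIndependent (ZMod p) ![(1 : GaloisField p 2), η] := by
    rw [LinearIndependent.pair_iff]
    intro s t hst
    refine hli s t ?_
    rw [← hst, Algebra.smul_def, Algebra.smul_def, mul_one]
    ring
  have hcard : Fintype.card (Fin 2) = Module.finrank (ZMod p) (GaloisField p 2) := by
    simp [GaloisField.finrank p (by norm_num : 2 ≠ 0)]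
  intro c
  have hc : c ∈ Submodule.span (ZMod p) (Set.range ![(1 : GaloisField p 2), η]) := by
    rw [← coe_basisOfLinearIndependentOfCardEqFinrank li hcard,
      Module.Basis.span_eq]
    trivial
  have hrange : Set.range ![(1 : GaloisField p 2), η] = {1, η} := by
    simp [Matrix.range_cons, Matrix.range_empty]
    exact Set.pair_comm η 1
  rw [hrange] at hc
  obtain ⟨a, b, hab⟩ := Submodule.mem_span_pair.mp hc
  refine ⟨a, b, ?_⟩
  rw [← hab, Algebra.smul_def, Algebra.smul_def, mul_one]
  ring

lemma PhiMap_injective (hn : 0 < n)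
    (hli : ∀ a b : ZMod p, algebraMap (ZMod p) (GaloisField p 2) a
        + η * algebraMap (ZMod p) (GaloisField p 2) b = 0 → a = 0 ∧ b = 0) :
    Function.Injective (PhiMap p n η) := by
  intro u v huv
  have hsub : PhiMap p n η (u - v) = 0 := by rw [PhiMap_sub, huv, sub_self]
  set w := u - v with hw
  have hmem : (∑ j : Fin n, C (algebraMap (ZMod p) (GaloisField p 2) (w.1 j)
      + η * algebraMap (ZMod p) (GaloisField p 2) (w.2 j)) * X ^ (j:ℕ))
      ∈ Ideal.span {(X : Polynomial (GaloisField p 2)) ^ n + 1} :=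
    Ideal.Quotient.eq_zero_iff_mem.mp hsub
  rw [Ideal.mem_span_singleton] at hmem
  have hdeg : (∑ j : Fin n, C (algebraMap (ZMod p) (GaloisField p 2) (w.1 j)
      + η * algebraMap (ZMod p) (GaloisField p 2) (w.2 j)) * X ^ (j:ℕ)).degree
      < ((X : Polynomial (GaloisField p 2)) ^ n + 1).degree := by
    rw [show ((X : Polynomial (GaloisField p 2)) ^ n + 1) = X ^ n + C 1 by rw [map_one],
      degree_X_pow_add_C hn]
    refine lt_of_le_of_lt (Polynomial.degree_sum_le _ _) ?_
    refine (Finset.sup_lt_iff (WithBot.bot_lt_coe n)).mpr fun j _ => ?_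
    refine lt_of_le_of_lt (Polynomial.degree_C_mul_X_pow_le _ _) ?_
    exact_mod_cast Nat.cast_lt.mpr j.isLt
  have hzero := eq_zero_of_dvd_of_degree_lt hmem hdeg
  have hcoeff : ∀ i : Fin n, algebraMap (ZMod p) (GaloisField p 2) (w.1 i)
      + η * algebraMap (ZMod p) (GaloisField p 2) (w.2 i) = 0 := by
    intro i
    have hc := congrArg (fun f => Polynomial.coeff f (i:ℕ)) hzero
    simp only [Polynomial.finset_sum_coeff, Polynomial.coeff_C_mul, Polynomial.coeff_X_pow,
      mul_ite, mul_one, mul_zero, Polynomial.coeff_zero, Fin.val_inj] at hc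
    simpa [Finset.sum_ite_eq, Finset.sum_ite_eq'] using hc
  have hw0 : w = 0 := by
    refine Prod.ext ?_ ?_ <;> funext i
    · exact (hli _ _ (hcoeff i)).1
    · exact (hli _ _ (hcoeff i)).2
  rw [hw] at hw0
  exact sub_eq_zero.mp hw0
end

section
variable (p n : ℕ)

lemma sympForm_add_left (u u' v : (Fin n → ZMod p) × (Fin n → ZMod p)) :
    sympForm p n (u + u') v = sympForm p n u v + sympForm p n u' v := by
  unfold sympForm
  simp only [Prod.fst_add, Prod.snd_add, Pi.add_apply, add_mul, Finset.sum_add_distrib]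
  ring

lemma sympForm_smul_left (a : ZMod p) (u v : (Fin n → ZMod p) × (Fin n → ZMod p)) :
    sympForm p n (a • u) v = a * sympForm p n u v := by
  unfold sympForm
  simp only [Prod.smul_fst, Prod.smul_snd, Pi.smul_apply, smul_eq_mul, mul_sub,
    Finset.mul_sum]
  congr 1 <;> exact Finset.sum_congr rfl fun j _ => by ring

lemma sympForm_zero_left (v : (Fin n → ZMod p) × (Fin n → ZMod p)) :
    sympForm p n 0 v = 0 := by
  simp [sympForm]

lemma symp_M (c₀ c₁ : ZMod p) (u v : (Fin n → ZMod p) × (Fin n → ZMod p)) :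
    sympForm p n (fun j => -(c₀ * u.2 j), fun j => u.1 j - c₁ * u.2 j) v
      = -(sympForm p n u (fun j => -(c₀ * v.2 j), fun j => v.1 j - c₁ * v.2 j))
        - c₁ * sympForm p n u v := by
  have hL : sympForm p n (fun j => -(c₀ * u.2 j), fun j => u.1 j - c₁ * u.2 j) v
      = (∑ j, -(c₀ * u.2 j) * v.2 j) - ∑ j, (u.1 j - c₁ * u.2 j) * v.1 j := rfl
  have hR : sympForm p n u (fun j => -(c₀ * v.2 j), fun j => v.1 j - c₁ * v.2 j)
      = (∑ j, u.1 j * (v.1 j - c₁ * v.2 j)) - ∑ j, u.2 j * -(c₀ * v.2 j) := rfl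
  have hS : sympForm p n u v = (∑ j, u.1 j * v.2 j) - ∑ j, u.2 j * v.1 j := rfl
  have l1 : ∑ j, -(c₀ * u.2 j) * v.2 j = -(c₀ * ∑ j, u.2 j * v.2 j) := by
    rw [Finset.mul_sum, ← Finset.sum_neg_distrib]
    exact Finset.sum_congr rfl fun j _ => by ring
  have l2 : ∑ j, (u.1 j - c₁ * u.2 j) * v.1 j
      = (∑ j, u.1 j * v.1 j) - c₁ * ∑ j, u.2 j * v.1 j := by
    rw [Finset.mul_sum, ← Finset.sum_sub_distrib]
    exact Finset.sum_congr rfl fun j _ => by ring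
  have r1 : ∑ j, u.1 j * (v.1 j - c₁ * v.2 j)
      = (∑ j, u.1 j * v.1 j) - c₁ * ∑ j, u.1 j * v.2 j := by
    rw [Finset.mul_sum, ← Finset.sum_sub_distrib]
    exact Finset.sum_congr rfl fun j _ => by ring
  have r2 : ∑ j, u.2 j * -(c₀ * v.2 j) = -(c₀ * ∑ j, u.2 j * v.2 j) := by
    rw [Finset.mul_sum, ← Finset.sum_neg_distrib]
    exact Finset.sum_congr rfl fun j _ => by ring
  rw [hL, hR, hS, l1, l2, r1, r2]
  ring
end

section
variable (p m : ℕ)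

lemma negashift_succ (hn : 0 < m + 1) (u : Fin (m+1) → ZMod p) (i : Fin m) :
    negashift p (m+1) hn u i.succ = u i.castSucc := by
  simp only [negashift, Fin.val_succ, Nat.succ_ne_zero, if_false, Nat.add_sub_cancel]
  congr 1

lemma negashift_sum (hn : 0 < m + 1) (a d : Fin (m+1) → ZMod p) :
    ∑ j, negashift p (m+1) hn a j * negashift p (m+1) hn d j = ∑ j, a j * d j := by
  rw [Fin.sum_univ_succ, Fin.sum_univ_castSucc (f := fun j => a j * d j)]
  simp only [negashift_zero, negashift_succ, neg_mul_neg]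
  ring

lemma negashift_inj {n : ℕ} (hn : 0 < n) : Function.Injective (negashift p n hn) := by
  have : Function.LeftInverse
      (fun (u : Fin n → ZMod p) (i : Fin n) =>
        if h : (i : ℕ) = n - 1 then -u ⟨0, hn⟩
        else u ⟨(i : ℕ) + 1, by omega⟩)
      (negashift p n hn) := by
    intro u
    funext i
    by_cases h : (i : ℕ) = n - 1
    · simp only [h, dif_pos]
      rw [show negashift p n hn u ⟨0, hn⟩ = -u ⟨n-1, Nat.sub_lt hn Nat.one_pos⟩ from by
        simp [negashift]]
      rw [neg_neg]
      congr 1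
      exact Fin.ext h.symm
    · simp only [h, dif_neg, not_false_iff]
      rw [show negashift p n hn u ⟨(i:ℕ)+1, by omega⟩
          = u ⟨(i:ℕ)+1-1, by omega⟩ from by simp [negashift]]
      congr 1
  exact this.injective

lemma sympForm_negashift {n : ℕ} (hn : 0 < n) (u v : (Fin n → ZMod p) × (Fin n → ZMod p)) :
    sympForm p n (negashift p n hn u.1, negashift p n hn u.2)
      (negashift p n hn v.1, negashift p n hn v.2) = sympForm p n u v := by
  obtain ⟨m, rfl⟩ : ∃ m, n = m + 1 := ⟨n - 1, (Nat.succ_pred_eq_of_pos hn).symm⟩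
  simp only [sympForm, negashift_sum]

end

/-- if `S` is a totally isotropic simultaneously negacyclic subspace of
`F_p^n × F_p^n` whose image `Φ(S)` is `F_{p²}`-linear, then `Φ(S)` is an ideal of
`R(η)`, and `Φ(S^⊥)` is also an ideal of `R(η)`. -/
theorem stmt6 (p n : ℕ) [Fact p.Prime] (hp : Odd p) (hn : 0 < n)
    (c₀ c₁ : ZMod p) (hcirr : Irreducible (X ^ 2 + C c₁ * X + C c₀))
    (η : GaloisField p 2) (hroot : aeval η (X ^ 2 + C c₁ * X + C c₀) = 0)
    (S : Submodule (ZMod p) ((Fin n → ZMod p) × (Fin n → ZMod p)))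
    (hiso : ∀ u ∈ S, ∀ v ∈ S, sympForm p n u v = 0)
    (hneg : ∀ ab ∈ S, (negashift p n hn ab.1, negashift p n hn ab.2) ∈ S)
    (hlin : ∀ c : GaloisField p 2, ∀ v ∈ S, ∃ w ∈ S, PhiMap p n η w = c • PhiMap p n η v) :
    (∃ I : Ideal (Rpn2 p n),
      PhiMap p n η '' (S : Set ((Fin n → ZMod p) × (Fin n → ZMod p)))
        = (I : Set (Rpn2 p n))) ∧
    (∃ J : Ideal (Rpn2 p n),
      PhiMap p n η '' {u | ∀ v ∈ S, sympForm p n u v = 0} = (J : Set (Rpn2 p n))) := by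
  have hη2 : η^2 + algebraMap (ZMod p) (GaloisField p 2) c₁ * η
      + algebraMap (ZMod p) (GaloisField p 2) c₀ = 0 := by
    simpa [map_add, map_mul, map_pow] using hroot
  have hli := hli_of_irred p η c₀ c₁ hcirr hroot
  have hspan := eta_spans p η c₀ c₁ hcirr hroot
  have hinj := PhiMap_injective p n η hn hli
  -- N surjective on S
  have hNsurj : ∀ v ∈ S, ∃ w ∈ S,
      (negashift p n hn w.1, negashift p n hn w.2) = v := by
    let f : ↥S → ↥S := fun x =>
      ⟨(negashift p n hn x.1.1, negashift p n hn x.1.2), hneg x.1 x.2⟩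
    have hinjf : Function.Injective f := by
      intro x y hxy
      have h := congrArg Subtype.val hxy
      have h1 := congrArg Prod.fst h
      have h2 := congrArg Prod.snd h
      exact Subtype.ext (Prod.ext (negashift_inj p hn h1) (negashift_inj p hn h2))
    have hsurf := Finite.injective_iff_surjective.mp hinjf
    intro v hv
    obtain ⟨w, hw⟩ := hsurf ⟨v, hv⟩
    exact ⟨w.1, w.2, congrArg Subtype.val hw⟩
  -- multiplication-by-η map preserves S
  have hMS : ∀ v ∈ S,
      ((fun j => -(c₀ * v.2 j), fun j => v.1 j - c₁ * v.2 j) :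
        (Fin n → ZMod p) × (Fin n → ZMod p)) ∈ S := by
    intro v hv
    obtain ⟨w, hwS, hw⟩ := hlin η v hv
    have heq : w = ((fun j => -(c₀ * v.2 j), fun j => v.1 j - c₁ * v.2 j) :
        (Fin n → ZMod p) × (Fin n → ZMod p)) :=
      hinj (hw.trans (PhiMap_eta p n η c₀ c₁ hη2 v))
    rw [← heq]
    exact hwS
  constructor
  · apply exists_ideal
    · exact ⟨0, S.zero_mem, PhiMap_zero p n η⟩
    · rintro x ⟨u, hu, rfl⟩ y ⟨v, hv, rfl⟩
      exact ⟨u + v, S.add_mem hu hv, PhiMap_add p n η u v⟩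
    · rintro c x ⟨v, hv, rfl⟩
      obtain ⟨w, hwS, hw⟩ := hlin c v hv
      exact ⟨w, hwS, hw⟩
    · rintro x ⟨v, hv, rfl⟩
      exact ⟨_, hneg v hv, (PhiMap_X p n η hn v).symm⟩
  · -- the dual space
    have hsp_add : ∀ u, (∀ v ∈ S, sympForm p n u v = 0) →
        ∀ u', (∀ v ∈ S, sympForm p n u' v = 0) →
        ∀ v ∈ S, sympForm p n (u + u') v = 0 := by
      intro u hu u' hu' v hv
      rw [sympForm_add_left, hu v hv, hu' v hv, add_zero]
    have hsp_smul : ∀ (a : ZMod p), ∀ u, (∀ v ∈ S, sympForm p n u v = 0) →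
        ∀ v ∈ S, sympForm p n (a • u) v = 0 := by
      intro a u hu v hv
      rw [sympForm_smul_left, hu v hv, mul_zero]
    have hsp_N : ∀ u, (∀ v ∈ S, sympForm p n u v = 0) →
        ∀ v ∈ S, sympForm p n (negashift p n hn u.1, negashift p n hn u.2) v = 0 := by
      intro u hu v hv
      obtain ⟨w, hwS, rfl⟩ := hNsurj v hv
      rw [sympForm_negashift]
      exact hu w hwS
    have hsp_M : ∀ u, (∀ v ∈ S, sympForm p n u v = 0) →
        ∀ v ∈ S, sympForm p n
          ((fun j => -(c₀ * u.2 j), fun j => u.1 j - c₁ * u.2 j) :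
            (Fin n → ZMod p) × (Fin n → ZMod p)) v = 0 := by
      intro u hu v hv
      rw [symp_M]
      have h2 : sympForm p n u
          ((fun j => -(c₀ * v.2 j), fun j => v.1 j - c₁ * v.2 j) :
            (Fin n → ZMod p) × (Fin n → ZMod p)) = 0 := hu _ (hMS v hv)
      rw [h2, hu v hv, mul_zero, neg_zero, sub_zero]
    apply exists_ideal
    · exact ⟨0, fun v hv => sympForm_zero_left p n v, PhiMap_zero p n η⟩
    · rintro x ⟨u, hu, rfl⟩ y ⟨u', hu', rfl⟩
      exact ⟨u + u', hsp_add u hu u' hu', PhiMap_add p n η u u'⟩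
    · rintro c x ⟨u, hu, rfl⟩
      obtain ⟨a, b, rfl⟩ := hspan c
      refine ⟨a • u + b • ((fun j => -(c₀ * u.2 j), fun j => u.1 j - c₁ * u.2 j) :
          (Fin n → ZMod p) × (Fin n → ZMod p)),
        hsp_add _ (hsp_smul a u hu) _ (hsp_smul b _ (hsp_M u hu)), ?_⟩
      rw [PhiMap_add, PhiMap_smulZ, PhiMap_smulZ,
        show PhiMap p n η ((fun j => -(c₀ * u.2 j), fun j => u.1 j - c₁ * u.2 j) :
          (Fin n → ZMod p) × (Fin n → ZMod p)) = η • PhiMap p n η u from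
          (PhiMap_eta p n η c₀ c₁ hη2 u).symm,
        add_smul]
      congr 1
      rw [smul_smul, mul_comm (algebraMap (ZMod p) (GaloisField p 2) b) η]
    · rintro x ⟨u, hu, rfl⟩
      exact ⟨_, hsp_N u hu, (PhiMap_X p n η hn u).symm⟩
end

section
/- Let p be an odd prime, and let n divide p^t + 1 for some positive integer t with (p^t+1)/n odd. Let η ∈ F_{p^2} be a root of an irreducible quadratic over F_p, and let Φ : F_p^n × F_p^n → R(η) = F_{p^2}[X]/(X^n+1) be the identification (a,b) ↦ a + ηb. Let S be a totally isotropic simultaneously negacyclic subspace of F_p^n × F_p^n such that Φ(S) is an ideal of R(η). Let g be the monic generator of the ideal of R = F_p[X]/(X^n+1) given by the first projection F = {a : (a,b) ∈ S for some b}, and assume g(−X) = g(X). Then there is exactly one f ∈ R such that (g,f) ∈ S (i.e., S is uniquely negacyclic). -/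
open Polynomial

/-- The cyclotomic ring `R = F_p[X]/(X^n + 1)`. -/
abbrev Rpn (p n : ℕ) := Polynomial (ZMod p) ⧸ Ideal.span {(X : Polynomial (ZMod p)) ^ n + 1}

/-- The quotient map `F_p[X] → R`. -/
noncomputable def mkR (p n : ℕ) : Polynomial (ZMod p) →+* Rpn p n :=
  Ideal.Quotient.mk (Ideal.span {(X : Polynomial (ZMod p)) ^ n + 1})

/-- The polynomial `a_0 + a_1 X + ⋯ + a_{n−1} X^{n−1}` attached to a vector. -/
noncomputable def toPoly (p n : ℕ) (a : Fin n → ZMod p) : Polynomial (ZMod p) :=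
  ∑ j : Fin n, C (a j) * X ^ (j : ℕ)

/-- The identification `F_p^n → R`, `a ↦ a(x)`. -/
noncomputable def toR (p n : ℕ) (a : Fin n → ZMod p) : Rpn p n := mkR p n (toPoly p n a)

/-- The identification `F_p^n × F_p^n → R × R`. -/
noncomputable def toR2 (p n : ℕ) (ab : (Fin n → ZMod p) × (Fin n → ZMod p)) :
    Rpn p n × Rpn p n := (toR p n ab.1, toR p n ab.2)

section Generic
variable {K : Type*} [Field K]

lemma aux_coeff_sum {n : ℕ} (γ : Fin n → K) (i : ℕ) :
    (∑ j : Fin n, C (γ j) * X ^ (j : ℕ)).coeff i = if h : i < n then γ ⟨i, h⟩ else 0 := by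
  rw [finset_sum_coeff]
  simp only [coeff_C_mul, coeff_X_pow, mul_ite, mul_one, mul_zero]
  split
  · next h =>
    rw [Finset.sum_eq_single (⟨i, h⟩ : Fin n)]
    · simp
    · intro j _ hj
      rw [if_neg]
      intro hij
      exact hj (Fin.ext hij.symm)
    · intro habs; exact absurd (Finset.mem_univ _) habs
  · next h =>
    apply Finset.sum_eq_zero; intro j _
    rw [if_neg]
    intro hij
    exact h (hij ▸ j.isLt)

lemma aux_natDegree_sum_le {n : ℕ} (γ : Fin n → K) :
    (∑ j : Fin n, C (γ j) * X ^ (j : ℕ)).natDegree ≤ n - 1 := by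
  rw [natDegree_le_iff_coeff_eq_zero]
  intro m hm
  rw [aux_coeff_sum, dif_neg]
  omega

lemma aux_eq_zero_of_dvd {n : ℕ} (f : K[X]) (hc : ∀ m, n ≤ m → f.coeff m = 0)
    (hd : ((X : K[X]) ^ n + 1) ∣ f) : f = 0 := by
  by_contra hne
  have h1 : ((X : K[X]) ^ n + 1).natDegree = n := by
    simpa using (natDegree_X_pow_add_C (n := n) (r := (1 : K)))
  have h2 := Polynomial.natDegree_le_of_dvd hd hne
  rw [h1] at h2
  exact (Polynomial.leadingCoeff_ne_zero.mpr hne) (hc _ h2)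

end Generic

section RpnLemmas
variable (p n : ℕ) [Fact p.Prime]

lemma aux_negashift_poly (hn : 0 < n) (u : Fin n → ZMod p) :
    toPoly p n (negashift p n hn u)
      = X * toPoly p n u - C (u ⟨n - 1, by omega⟩) * ((X : (ZMod p)[X]) ^ n + 1) := by
  unfold toPoly negashift
  ext k
  simp only [coeff_sub, coeff_C_mul, coeff_add, coeff_X_pow, coeff_one, aux_coeff_sum]
  cases k with
  | zero =>
    rw [mul_coeff_zero, coeff_X_zero, zero_mul, dif_pos hn]
    split_ifs with h1 h2 h3 <;> first
      | (exfalso; omega)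
      | ring
      | (exfalso; exact h2)
      | (exfalso; revert h1; simp)
  | succ k =>
    rw [coeff_X_mul, aux_coeff_sum]
    split_ifs
    all_goals try (exfalso; assumption)
    all_goals try (exfalso; omega)
    all_goals try ring
    all_goals try (exact congrArg u (Fin.ext (by simp; try omega)))
    all_goals (rw [show (⟨k, by omega⟩ : Fin n) = ⟨n - 1, by omega⟩ from Fin.ext (by show k = n - 1; omega)]; ring)

lemma aux_mkR_Xn (hn : 0 < n) : (mkR p n X) ^ n = -1 := by
  have h0 : mkR p n ((X : (ZMod p)[X]) ^ n + 1) = 0 :=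
    Ideal.Quotient.eq_zero_iff_mem.mpr (Ideal.subset_span rfl)
  rw [map_add, map_pow, map_one] at h0
  exact eq_neg_of_add_eq_zero_left h0

lemma aux_toR_negashift (hn : 0 < n) (u : Fin n → ZMod p) :
    toR p n (negashift p n hn u) = mkR p n X * toR p n u := by
  unfold toR
  rw [aux_negashift_poly p n hn u, map_sub, map_mul, map_mul]
  have h0 : mkR p n ((X : (ZMod p)[X]) ^ n + 1) = 0 :=
    Ideal.Quotient.eq_zero_iff_mem.mpr (Ideal.subset_span rfl)
  rw [h0, mul_zero, sub_zero]

lemma aux_toR_negIter (hn : 0 < n) (k : ℕ) (u : Fin n → ZMod p) :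
    toR p n ((negashift p n hn)^[k] u) = (mkR p n X) ^ k * toR p n u := by
  induction k with
  | zero => simp
  | succ k ih =>
    rw [Function.iterate_succ_apply', aux_toR_negashift p n hn, ih, pow_succ]
    ring

lemma aux_toR_inj (hn : 0 < n) {u v : Fin n → ZMod p} (h : toR p n u = toR p n v) : u = v := by
  have hd : ((X : (ZMod p)[X]) ^ n + 1) ∣ (toPoly p n u - toPoly p n v) :=
    Ideal.mem_span_singleton.mp (Ideal.Quotient.eq.mp h)
  have hz : toPoly p n u - toPoly p n v = 0 := by
    apply aux_eq_zero_of_dvd _ _ hd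
    intro m hm
    unfold toPoly
    rw [coeff_sub, aux_coeff_sum, aux_coeff_sum, dif_neg (by omega), dif_neg (by omega), sub_zero]
  funext i
  have h2 := congrArg (fun q => Polynomial.coeff q (i : ℕ)) hz
  simp only [coeff_sub, coeff_zero] at h2
  unfold toPoly at h2
  rw [aux_coeff_sum, aux_coeff_sum, dif_pos i.isLt, dif_pos i.isLt] at h2
  rw [← sub_eq_zero]
  simpa using h2

lemma aux_aeval_mkX (P : (ZMod p)[X]) : aeval (mkR p n X) P = mkR p n P :=
  AdjoinRoot.aeval_eq P

lemma aux_mk_fold (hn : 0 < n) (Q : (ZMod p)[X]) (hQ : Q.natDegree < 2 * n) :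
    mkR p n Q = toR p n (fun j => Q.coeff (j : ℕ) - Q.coeff (n + (j : ℕ))) := by
  rw [← aux_aeval_mkX, aeval_eq_sum_range' hQ]
  have h2n : 2 * n = n + n := by ring
  rw [h2n]
  rw [Finset.range_eq_Ico, ← Finset.sum_Ico_consecutive _ (Nat.zero_le n) (by omega : n ≤ n + n)]
  have hIco : ∑ i ∈ Finset.Ico n (n + n), Q.coeff i • (mkR p n X) ^ i
      = ∑ i ∈ Finset.range n, (-(Q.coeff (n + i) • (mkR p n X) ^ i)) := by
    rw [Finset.sum_Ico_eq_sum_range]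
    simp only [Nat.add_sub_cancel]
    apply Finset.sum_congr rfl
    intro i _
    rw [pow_add, aux_mkR_Xn p n hn]
    rw [show (-1 : Rpn p n) * (mkR p n X) ^ i = -((mkR p n X) ^ i) from by ring, smul_neg]
  rw [hIco, ← Finset.range_eq_Ico]
  have hRHS : toR p n (fun j => Q.coeff (j : ℕ) - Q.coeff (n + (j : ℕ)))
      = ∑ i ∈ Finset.range n,
          (Q.coeff i • (mkR p n X) ^ i + -(Q.coeff (n + i) • (mkR p n X) ^ i)) := by
    unfold toR toPoly
    rw [← aux_aeval_mkX,
      aeval_eq_sum_range' (lt_of_le_of_lt (aux_natDegree_sum_le _) (by omega : n - 1 < n))]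
    apply Finset.sum_congr rfl
    intro i hi
    have hi' : i < n := Finset.mem_range.mp hi
    rw [aux_coeff_sum, dif_pos hi', sub_smul]
    ring
  rw [hRHS, ← Finset.sum_add_distrib]

lemma aux_coeff_pair (hn : 0 < n) (u v : Fin n → ZMod p) :
    (toPoly p n u * reflect (n - 1) (toPoly p n v)).coeff (n - 1) = ∑ j, u j * v j := by
  rw [coeff_mul, Finset.Nat.sum_antidiagonal_eq_sum_range_succ_mk]
  rw [Nat.succ_eq_add_one, (by omega : n - 1 + 1 = n)]
  have h2 : ∀ j : Fin n, u j * v j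
      = (toPoly p n u).coeff (j:ℕ) * (toPoly p n v).coeff (j:ℕ) := by
    intro j
    unfold toPoly
    rw [aux_coeff_sum, aux_coeff_sum, dif_pos j.isLt, dif_pos j.isLt]
  rw [Finset.sum_congr rfl (fun j _ => h2 j),
    Fin.sum_univ_eq_sum_range (fun k => (toPoly p n u).coeff k * (toPoly p n v).coeff k)]
  apply Finset.sum_congr rfl
  intro k hk
  have hk' : k < n := Finset.mem_range.mp hk
  rw [coeff_reflect, revAt_le (by omega : n - 1 - k ≤ n - 1),
    (by omega : n - 1 - (n - 1 - k) = k)]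

lemma aux_coeff_reflect_ge (hn : 0 < n) (v : Fin n → ZMod p) (m : ℕ) (hm : n ≤ m) :
    (reflect (n - 1) (toPoly p n v)).coeff m = 0 := by
  rw [coeff_reflect, revAt_eq_self_of_lt (by omega)]
  unfold toPoly
  rw [aux_coeff_sum, dif_neg (by omega)]

lemma aux_natDegree_reflect_le (hn : 0 < n) (v : Fin n → ZMod p) :
    (reflect (n - 1) (toPoly p n v)).natDegree ≤ n - 1 := by
  rw [natDegree_le_iff_coeff_eq_zero]
  intro m hm
  exact aux_coeff_reflect_ge p n hn v m (by omega)

lemma aux_shift_coord (hn : 0 < n) :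
    ∀ k, k < n → ∀ w : Fin n → ZMod p,
      ((negashift p n hn)^[k] w) ⟨n - 1, by omega⟩ = w ⟨n - 1 - k, by omega⟩ := by
  intro k
  induction k with
  | zero =>
    intro _ w
    rw [Function.iterate_zero_apply]
    exact congrArg w (Fin.ext (by show n - 1 = n - 1 - 0; omega))
  | succ k ih =>
    intro hk w
    rw [Function.iterate_succ_apply, ih (by omega)]
    unfold negashift
    rw [if_neg (by show ¬ (n - 1 - k = 0); omega)]
    exact congrArg w (Fin.ext (by show n - 1 - k - 1 = n - 1 - (k+1); omega))

lemma aux_frob_pow (s : ℕ) (h : (ZMod p)[X]) : h ^ (p ^ s) = expand (ZMod p) (p ^ s) h := by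
  induction s with
  | zero => simp [expand_one]
  | succ s ih =>
    have h2 : ∀ r : (ZMod p)[X], r ^ p = expand (ZMod p) p r := by
      intro r
      have h3 := Polynomial.map_frobenius_expand p r
      rw [ZMod.frobenius_zmod, Polynomial.map_id] at h3
      exact h3.symm
    rw [pow_succ, pow_mul, ih, h2, expand_expand, Nat.mul_comm]

lemma aux_recG (t : ℕ) (hn : 0 < n) (ht : 0 < t)
    (hdvd : n ∣ p ^ t + 1) (hq : Odd ((p ^ t + 1) / n))
    (g : (ZMod p)[X]) (hgdvd : g ∣ X ^ n + 1) (hgneg : g.comp (-X) = g) :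
    g ∣ reflect g.natDegree g := by
  set x : Rpn p n := mkR p n X with hxdef
  have hxn : x ^ n = -1 := aux_mkR_Xn p n hn
  have hnq : n * ((p ^ t + 1) / n) = p ^ t + 1 := Nat.mul_div_cancel' hdvd
  have hxpt1 : x ^ (p ^ t + 1) = -1 := by
    rw [← hnq, pow_mul, hxn]
    exact Odd.neg_one_pow (α := Rpn p n) hq
  have hxy : x * (-(x ^ (p ^ t))) = 1 := by
    calc x * (-(x ^ (p ^ t))) = (-(x ^ (p ^ t + 1)) : Rpn p n) := by ring
      _ = 1 := by rw [hxpt1]; ring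
  have hyx : (-(x ^ (p ^ t))) * x = 1 := by rw [mul_comm]; exact hxy
  letI : Invertible (-(x ^ (p ^ t))) := ⟨x, hxy, hyx⟩
  have hinv : ⅟(-(x ^ (p ^ t))) = x := rfl
  have key := Polynomial.eval₂_reflect_mul_pow (algebraMap (ZMod p) (Rpn p n))
      (-(x ^ (p ^ t))) g.natDegree g le_rfl
  rw [hinv, ← aeval_def, ← aeval_def] at key
  -- key : aeval x (reflect m g) * (-(x ^ p^t)) ^ m = aeval (-(x^p^t)) g
  have hgnegeval : ∀ y : Rpn p n, aeval (-y) g = aeval y g := by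
    intro y
    conv_rhs => rw [← hgneg]
    rw [aeval_comp]
    simp
  have hfrobeval : aeval (x ^ (p ^ t)) g = (mkR p n g) ^ (p ^ t) := by
    rw [← expand_aeval, aux_aeval_mkX, ← aux_frob_pow, map_pow]
  have key2 : mkR p n (reflect g.natDegree g)
      = mkR p n (g ^ (p ^ t) * X ^ g.natDegree) := by
    have e1 : mkR p n (reflect g.natDegree g) = aeval x (reflect g.natDegree g) :=
      (aux_aeval_mkX p n _).symm
    have e2 := congrArg (fun z => z * x ^ g.natDegree) key
    rw [mul_assoc, ← mul_pow, hyx, one_pow, mul_one] at e2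
    rw [e1, e2, hgnegeval, hfrobeval, map_mul, map_pow, map_pow]
  have hdvd2 : ((X : (ZMod p)[X]) ^ n + 1) ∣ (reflect g.natDegree g - g ^ (p ^ t) * X ^ g.natDegree) :=
    Ideal.mem_span_singleton.mp (Ideal.Quotient.eq.mp key2)
  have hg1 : g ∣ (reflect g.natDegree g - g ^ (p ^ t) * X ^ g.natDegree) :=
    dvd_trans hgdvd hdvd2
  have hg2 : g ∣ g ^ (p ^ t) * X ^ g.natDegree :=
    dvd_mul_of_dvd_left (dvd_pow_self g (pow_pos (Fact.out : p.Prime).pos t).ne') _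
  have := dvd_add hg1 hg2
  rwa [sub_add_cancel] at this

lemma aux_quad_natDegree (c₀ c₁ : ZMod p) :
    ((X : (ZMod p)[X]) ^ 2 + C c₁ * X + C c₀).natDegree = 2 := by
  have h : ((X : (ZMod p)[X]) ^ 2 + C c₁ * X + C c₀) = C 1 * X ^ 2 + C c₁ * X + C c₀ := by
    rw [map_one, one_mul]
  rw [h]
  exact natDegree_quadratic one_ne_zero

lemma aux_eta_not (c₀ c₁ : ZMod p)
    (hcirr : Irreducible ((X : (ZMod p)[X]) ^ 2 + C c₁ * X + C c₀)) (η : GaloisField p 2)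
    (hroot : aeval η ((X : (ZMod p)[X]) ^ 2 + C c₁ * X + C c₀) = 0) :
    ∀ s : ZMod p, algebraMap (ZMod p) (GaloisField p 2) s ≠ η := by
  intro s hs
  have hinj : Function.Injective (algebraMap (ZMod p) (GaloisField p 2)) :=
    (algebraMap (ZMod p) (GaloisField p 2)).injective
  have hroot' : s ^ 2 + c₁ * s + c₀ = 0 := by
    apply hinj
    rw [map_zero]
    rw [← hroot, ← hs]
    simp [map_add, map_mul, map_pow]
  have hdvd : (X - C s) ∣ ((X : (ZMod p)[X]) ^ 2 + C c₁ * X + C c₀) := by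
    apply dvd_iff_isRoot.mpr
    simp [IsRoot, hroot']
  obtain ⟨k, hk⟩ := hdvd
  rcases hcirr.isUnit_or_isUnit hk with h | h
  · exact Polynomial.not_isUnit_X_sub_C s h
  · have hk0 : k ≠ 0 := by
      intro h0
      rw [h0, mul_zero] at hk
      have := aux_quad_natDegree p c₀ c₁
      rw [hk] at this
      simp at this
    have h2 : ((X : (ZMod p)[X]) ^ 2 + C c₁ * X + C c₀).natDegree = 1 := by
      rw [hk, natDegree_mul (X_sub_C_ne_zero s) hk0, natDegree_X_sub_C,
        natDegree_eq_zero_of_isUnit h]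
    rw [aux_quad_natDegree p c₀ c₁] at h2
    omega

lemma aux_c0_ne (c₀ c₁ : ZMod p)
    (hcirr : Irreducible ((X : (ZMod p)[X]) ^ 2 + C c₁ * X + C c₀)) : c₀ ≠ 0 := by
  intro h0
  have hk : ((X : (ZMod p)[X]) ^ 2 + C c₁ * X + C c₀) = X * (X + C c₁) := by
    rw [h0]; ring_nf; rw [map_zero]; ring
  rcases hcirr.isUnit_or_isUnit hk with h | h
  · exact Polynomial.not_isUnit_X h
  · have := natDegree_eq_zero_of_isUnit h
    rw [natDegree_X_add_C] at this
    omega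

lemma aux_phi_inj (hn : 0 < n) (c₀ c₁ : ZMod p)
    (hcirr : Irreducible ((X : (ZMod p)[X]) ^ 2 + C c₁ * X + C c₀)) (η : GaloisField p 2)
    (hroot : aeval η ((X : (ZMod p)[X]) ^ 2 + C c₁ * X + C c₀) = 0)
    (ab ab' : (Fin n → ZMod p) × (Fin n → ZMod p))
    (h : PhiMap p n η ab = PhiMap p n η ab') : ab = ab' := by
  set alg := algebraMap (ZMod p) (GaloisField p 2) with halg
  have hinj : Function.Injective alg := alg.injective
  unfold PhiMap at h
  set γ : Fin n → GaloisField p 2 := fun j => alg (ab.1 j) + η * alg (ab.2 j) with hγ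
  set γ' : Fin n → GaloisField p 2 := fun j => alg (ab'.1 j) + η * alg (ab'.2 j) with hγ'
  have hd : ((X : (GaloisField p 2)[X]) ^ n + 1)
      ∣ ((∑ j : Fin n, C (γ j) * X ^ (j : ℕ)) - (∑ j : Fin n, C (γ' j) * X ^ (j : ℕ))) :=
    Ideal.mem_span_singleton.mp (Ideal.Quotient.eq.mp h)
  have hz := aux_eq_zero_of_dvd _ (fun m hm => by
    rw [coeff_sub, aux_coeff_sum, aux_coeff_sum, dif_neg (by omega), dif_neg (by omega), sub_zero]) hd
  have hcoeff : ∀ j : Fin n, γ j = γ' j := by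
    intro j
    have h2 := congrArg (fun q => Polynomial.coeff q (j : ℕ)) hz
    simp only [coeff_sub, coeff_zero] at h2
    rw [aux_coeff_sum, aux_coeff_sum, dif_pos j.isLt, dif_pos j.isLt] at h2
    have h3 := sub_eq_zero.mp h2
    simpa using h3
  have hkey : ∀ j : Fin n, ab.1 j = ab'.1 j ∧ ab.2 j = ab'.2 j := by
    intro j
    have h4 := hcoeff j
    rw [hγ, hγ'] at h4
    simp only at h4
    have hb : ab.2 j = ab'.2 j := by
      by_contra hne
      have hd2 : ab.2 j - ab'.2 j ≠ 0 := sub_ne_zero.mpr hne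
      have h7 : alg (ab.2 j - ab'.2 j) ≠ 0 := fun hc => hd2 (hinj (by rw [hc, map_zero]))
      have h5 : η * alg (ab.2 j - ab'.2 j) = alg (ab'.1 j - ab.1 j) := by
        rw [map_sub, map_sub]
        linear_combination h4
      have h6 : η = alg ((ab'.1 j - ab.1 j) * (ab.2 j - ab'.2 j)⁻¹) := by
        rw [map_mul, map_inv₀, ← h5, mul_assoc, mul_inv_cancel₀ h7, mul_one]
      exact aux_eta_not p c₀ c₁ hcirr η hroot _ h6.symm
    constructor
    · apply hinj
      have := h4
      rw [hb] at this
      exact add_right_cancel this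
    · exact hb
  exact Prod.ext (funext fun j => (hkey j).1) (funext fun j => (hkey j).2)

lemma aux_coeff_toPoly (u : Fin n → ZMod p) (i : ℕ) :
    (toPoly p n u).coeff i = if h : i < n then u ⟨i, h⟩ else 0 := by
  unfold toPoly
  exact aux_coeff_sum u i

lemma aux_natDegree_toPoly_le (u : Fin n → ZMod p) : (toPoly p n u).natDegree ≤ n - 1 := by
  unfold toPoly
  exact aux_natDegree_sum_le u

lemma aux_toPoly_smul (c : ZMod p) (u : Fin n → ZMod p) :
    toPoly p n (c • u) = C c * toPoly p n u := by
  unfold toPoly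
  rw [Finset.mul_sum]
  apply Finset.sum_congr rfl
  intro j _
  rw [← mul_assoc, ← C_mul]
  rfl

lemma aux_toR_zero : toR p n (0 : Fin n → ZMod p) = 0 := by
  unfold toR toPoly
  simp


set_option maxHeartbeats 1000000 in
/-- for a linear `t`-Frobenius negacyclic code (i.e. `S` totally isotropic,
simultaneously negacyclic, `Φ(S)` an ideal of `R(η)`), if the monic generator `g` of the
ideal corresponding to the first projection of `S` satisfies `g(−X) = g(X)`, then `S` is
uniquely negacyclic: there is exactly one `f ∈ R` with `(g, f) ∈ S`. -/
theorem stmt8 (p n t : ℕ) [Fact p.Prime] (hp : Odd p) (ht : 0 < t) (hn : 0 < n)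
    (hdvd : n ∣ p ^ t + 1) (hq : Odd ((p ^ t + 1) / n))
    (c₀ c₁ : ZMod p) (hcirr : Irreducible (X ^ 2 + C c₁ * X + C c₀))
    (η : GaloisField p 2) (hroot : aeval η (X ^ 2 + C c₁ * X + C c₀) = 0)
    (S : Submodule (ZMod p) ((Fin n → ZMod p) × (Fin n → ZMod p)))
    (hiso : ∀ u ∈ S, ∀ v ∈ S, sympForm p n u v = 0)
    (hneg : ∀ ab ∈ S, (negashift p n hn ab.1, negashift p n hn ab.2) ∈ S)
    (hlin : ∃ I : Ideal (Rpn2 p n),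
      PhiMap p n η '' (S : Set ((Fin n → ZMod p) × (Fin n → ZMod p)))
        = (I : Set (Rpn2 p n)))
    (g : Polynomial (ZMod p)) (hgm : g.Monic) (hgdvd : g ∣ X ^ n + 1)
    (hgen : {r : Rpn p n | ∃ ab ∈ S, toR p n ab.1 = r}
        = (Ideal.span {mkR p n g} : Set (Rpn p n)))
    (hgneg : g.comp (-X) = g) :
    ∃! f : Rpn p n,
      (mkR p n g, f) ∈ toR2 p n '' (S : Set ((Fin n → ZMod p) × (Fin n → ZMod p))) := by
    classical
  -- a pair whose first component maps to g
  have hgenmem : mkR p n g ∈ {r : Rpn p n | ∃ ab ∈ S, toR p n ab.1 = r} := by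
    rw [hgen]
    exact Ideal.subset_span rfl
  obtain ⟨ag, hagS, hag⟩ := hgenmem
  -- the kernel triviality statement
  have hker : ∀ b : Fin n → ZMod p, ((0 : Fin n → ZMod p), b) ∈ S → b = 0 := by
    intro b hb
    set alg := algebraMap (ZMod p) (GaloisField p 2) with halg
    -- Step A: Phi(S) ideal implies ((-c₀) • b, (-c₁) • b) ∈ S
    obtain ⟨I, hI⟩ := hlin
    have hb_mem : PhiMap p n η ((0 : Fin n → ZMod p), b) ∈ (I : Set (Rpn2 p n)) := by
      rw [← hI]
      exact Set.mem_image_of_mem _ hb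
    have hmul : mkR2 p n (C η) * PhiMap p n η ((0 : Fin n → ZMod p), b) ∈ I :=
      I.mul_mem_left _ hb_mem
    have hphi_eq : mkR2 p n (C η) * PhiMap p n η ((0 : Fin n → ZMod p), b)
        = PhiMap p n η (((-c₀) • b, (-c₁) • b)) := by
      unfold PhiMap
      rw [← map_mul, Finset.mul_sum]
      congr 1
      apply Finset.sum_congr rfl
      intro j _
      rw [← mul_assoc, ← C_mul]
      congr 2
      have hη2 : η ^ 2 + alg c₁ * η + alg c₀ = 0 := by
        rw [← hroot]
        simp [halg]
      simp only [Pi.smul_apply, Pi.zero_apply, smul_eq_mul, map_zero, map_mul, map_neg, zero_add, mul_zero]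
      ring_nf
      linear_combination alg (b j) * hη2
    have hmem2 : PhiMap p n η (((-c₀) • b, (-c₁) • b))
        ∈ PhiMap p n η '' (S : Set ((Fin n → ZMod p) × (Fin n → ZMod p))) := by
      rw [hI, ← hphi_eq]
      exact hmul
    obtain ⟨ab2, hab2S, hab2e⟩ := hmem2
    have hab2eq : ab2 = (((-c₀) • b, (-c₁) • b)
        : (Fin n → ZMod p) × (Fin n → ZMod p)) :=
      aux_phi_inj p n hn c₀ c₁ hcirr η hroot _ _ hab2e
    rw [hab2eq] at hab2S
    -- Step B: g divides toPoly b
    have hc0 : c₀ ≠ 0 := aux_c0_ne p c₀ c₁ hcirr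
    have hg0 : g ≠ 0 := hgm.ne_zero
    have hmem3 : toR p n ((-c₀) • b) ∈ {r : Rpn p n | ∃ ab ∈ S, toR p n ab.1 = r} :=
      ⟨((-c₀) • b, (-c₁) • b), hab2S, rfl⟩
    rw [hgen] at hmem3
    have hsm : toR p n ((-c₀) • b) = mkR p n (C (-c₀)) * toR p n b := by
      unfold toR
      rw [aux_toPoly_smul, map_mul]
    have hdvd1 : mkR p n g ∣ toR p n b := by
      obtain ⟨z, hz⟩ := Ideal.mem_span_singleton.mp hmem3
      refine ⟨mkR p n (C (-c₀)⁻¹) * z, ?_⟩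
      have h5 : mkR p n (C (-c₀)⁻¹) * toR p n ((-c₀) • b) = toR p n b := by
        rw [hsm, ← mul_assoc, ← map_mul, ← C_mul,
          inv_mul_cancel₀ (neg_ne_zero.mpr hc0), map_one, map_one, one_mul]
      rw [← h5, hz]
      ring
    have hgB : g ∣ toPoly p n b := by
      obtain ⟨z, hz⟩ := hdvd1
      obtain ⟨hpol, rfl⟩ := Ideal.Quotient.mk_surjective z
      have hz' : mkR p n (toPoly p n b) = mkR p n (g * hpol) := by
        rw [map_mul]
        exact hz
      have hXdvd : ((X : (ZMod p)[X]) ^ n + 1) ∣ (toPoly p n b - g * hpol) :=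
        Ideal.mem_span_singleton.mp (Ideal.Quotient.eq.mp hz')
      have h6 : g ∣ toPoly p n b - g * hpol := hgdvd.trans hXdvd
      have h7 := dvd_add h6 (Dvd.intro hpol rfl)
      rwa [sub_add_cancel] at h7
    -- Step C: the product Z = mk(toPoly ag.1) * mk(reflect B) vanishes
    have hiter : ∀ k : ℕ, (((negashift p n hn)^[k] ag.1, (negashift p n hn)^[k] ag.2)
        : (Fin n → ZMod p) × (Fin n → ZMod p)) ∈ S := by
      intro k
      induction k with
      | zero => simpa using hagS
      | succ k ih =>
        rw [Function.iterate_succ_apply', Function.iterate_succ_apply']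
        exact hneg _ ih
    have hsymp0 : ∀ k : ℕ, (∑ j, ((negashift p n hn)^[k] ag.1) j * b j) = 0 := by
      intro k
      have h8 := hiso _ (hiter k) _ hb
      unfold sympForm at h8
      simpa using h8
    have hQdeg : ∀ u : Fin n → ZMod p,
        (toPoly p n u * reflect (n - 1) (toPoly p n b)).natDegree < 2 * n := by
      intro u
      apply lt_of_le_of_lt natDegree_mul_le
      have h1 := aux_natDegree_toPoly_le p n u
      have h2 := aux_natDegree_reflect_le p n hn b
      omega
    have hQup : ∀ u : Fin n → ZMod p,
        (toPoly p n u * reflect (n - 1) (toPoly p n b)).coeff (n + (n - 1)) = 0 := by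
      intro u
      apply coeff_eq_zero_of_natDegree_lt
      apply lt_of_le_of_lt natDegree_mul_le
      have h1 := aux_natDegree_toPoly_le p n u
      have h2 := aux_natDegree_reflect_le p n hn b
      omega
    have hQk : ∀ k : ℕ, (mkR p n X) ^ k
          * (mkR p n (toPoly p n ag.1) * mkR p n (reflect (n - 1) (toPoly p n b)))
        = toR p n (fun j =>
            (toPoly p n ((negashift p n hn)^[k] ag.1) * reflect (n - 1) (toPoly p n b)).coeff (j : ℕ)
            - (toPoly p n ((negashift p n hn)^[k] ag.1)
                * reflect (n - 1) (toPoly p n b)).coeff (n + (j : ℕ))) := by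
      intro k
      rw [← mul_assoc]
      have e1 : (mkR p n X) ^ k * mkR p n (toPoly p n ag.1)
          = mkR p n (toPoly p n ((negashift p n hn)^[k] ag.1)) :=
        (aux_toR_negIter p n hn k ag.1).symm
      rw [e1, ← map_mul]
      exact aux_mk_fold p n hn _ (hQdeg _)
    have hZw : mkR p n (toPoly p n ag.1) * mkR p n (reflect (n - 1) (toPoly p n b))
        = toR p n (fun j =>
            (toPoly p n ag.1 * reflect (n - 1) (toPoly p n b)).coeff (j : ℕ)
            - (toPoly p n ag.1 * reflect (n - 1) (toPoly p n b)).coeff (n + (j : ℕ))) := by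
      have h9 := hQk 0
      rwa [pow_zero, one_mul, Function.iterate_zero_apply] at h9
    have hcomp : ∀ k, k < n →
        ((negashift p n hn)^[k] (fun j =>
            (toPoly p n ag.1 * reflect (n - 1) (toPoly p n b)).coeff (j : ℕ)
            - (toPoly p n ag.1 * reflect (n - 1) (toPoly p n b)).coeff (n + (j : ℕ))))
          ⟨n - 1, by omega⟩ = 0 := by
      intro k hk
      have e2 : toR p n ((negashift p n hn)^[k] (fun j =>
            (toPoly p n ag.1 * reflect (n - 1) (toPoly p n b)).coeff (j : ℕ)
            - (toPoly p n ag.1 * reflect (n - 1) (toPoly p n b)).coeff (n + (j : ℕ))))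
          = toR p n (fun j =>
            (toPoly p n ((negashift p n hn)^[k] ag.1) * reflect (n - 1) (toPoly p n b)).coeff (j : ℕ)
            - (toPoly p n ((negashift p n hn)^[k] ag.1)
                * reflect (n - 1) (toPoly p n b)).coeff (n + (j : ℕ))) := by
        rw [aux_toR_negIter p n hn, ← hZw, hQk k]
      have e3 := aux_toR_inj p n hn e2
      have e4 := congrFun e3 (⟨n - 1, by omega⟩ : Fin n)
      have e5 : ((⟨n - 1, by omega⟩ : Fin n) : ℕ) = n - 1 := rfl
      rw [e4, e5, hQup, sub_zero, aux_coeff_pair p n hn, hsymp0]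
    have hw0 : (fun j : Fin n =>
            (toPoly p n ag.1 * reflect (n - 1) (toPoly p n b)).coeff (j : ℕ)
            - (toPoly p n ag.1 * reflect (n - 1) (toPoly p n b)).coeff (n + (j : ℕ)))
        = (0 : Fin n → ZMod p) := by
      funext i
      have hk5 := hcomp (n - 1 - (i : ℕ)) (by omega)
      rw [aux_shift_coord p n hn _ (by omega)] at hk5
      have e6 : (⟨n - 1 - (n - 1 - (i : ℕ)), by omega⟩ : Fin n) = i :=
        Fin.ext (by show n - 1 - (n - 1 - (i : ℕ)) = (i : ℕ); omega)
      rw [e6] at hk5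
      simpa using hk5
    have hZ0 : mkR p n (toPoly p n ag.1) * mkR p n (reflect (n - 1) (toPoly p n b)) = 0 := by
      rw [hZw, hw0, aux_toR_zero]
    -- Step D: gs divides reflect B
    obtain ⟨gs, hgs⟩ := hgdvd
    have hZmk : mkR p n (g * reflect (n - 1) (toPoly p n b)) = 0 := by
      rw [map_mul, ← hag]
      exact hZ0
    have hXdvd2 : ((X : (ZMod p)[X]) ^ n + 1) ∣ g * reflect (n - 1) (toPoly p n b) :=
      Ideal.mem_span_singleton.mp (Ideal.Quotient.eq_zero_iff_mem.mp hZmk)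
    have hgs_dvd : gs ∣ reflect (n - 1) (toPoly p n b) := by
      have h10 : g * gs ∣ g * reflect (n - 1) (toPoly p n b) := by
        rw [← hgs]
        exact hXdvd2
      exact (mul_dvd_mul_iff_left hg0).mp h10
    -- Step E: conclude b = 0
    by_cases hB0 : toPoly p n b = 0
    · funext i
      have h16 := congrArg (fun q => Polynomial.coeff q (i : ℕ)) hB0
      simp only [coeff_zero] at h16
      rw [aux_coeff_toPoly, dif_pos i.isLt] at h16
      simpa using h16
    · obtain ⟨hquot, hhq⟩ := hgB
      have hh0 : hquot ≠ 0 := fun hc => hB0 (by rw [hhq, hc, mul_zero])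
      have hdeg2 : g.natDegree + hquot.natDegree = (toPoly p n b).natDegree := by
        rw [hhq, natDegree_mul hg0 hh0]
      have hBdeg : (toPoly p n b).natDegree ≤ n - 1 := aux_natDegree_toPoly_le p n b
      have hrefl_mul : reflect (n - 1) (toPoly p n b)
          = reflect g.natDegree g * reflect (n - 1 - g.natDegree) hquot := by
        have hrm := reflect_mul (f := g) (g := hquot) le_rfl
          (show hquot.natDegree ≤ n - 1 - g.natDegree by omega)
        rw [show g.natDegree + (n - 1 - g.natDegree) = n - 1 by omega] at hrm
        rw [hhq]
        exact hrm
      have hg_refl : g ∣ reflect (n - 1) (toPoly p n b) := by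
        rw [hrefl_mul]
        exact Dvd.dvd.mul_right (aux_recG p n t hn ht hdvd hq g ⟨gs, hgs⟩ hgneg) _
      have hnzc : (n : ZMod p) ≠ 0 := by
        intro hcast
        have hpdvd : p ∣ n := (ZMod.natCast_eq_zero_iff n p).mp hcast
        have h11 : p ∣ p ^ t + 1 := hpdvd.trans hdvd
        have h12 : p ∣ p ^ t := dvd_pow_self p ht.ne'
        have h13 : p ∣ 1 := (Nat.dvd_add_right h12).mp h11
        have h14 := Nat.dvd_one.mp h13
        have h15 := (Fact.out : p.Prime).one_lt
        omega
      have hsep : ((X : (ZMod p)[X]) ^ n + 1).Separable := by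
        have e : ((X : (ZMod p)[X]) ^ n + 1) = X ^ n - C (-1) := by
          rw [map_neg, map_one, sub_neg_eq_add]
        rw [e]
        exact separable_X_pow_sub_C _ hnzc (neg_ne_zero.mpr one_ne_zero)
      have hcop : IsCoprime g gs := Polynomial.Separable.isCoprime (by rw [← hgs]; exact hsep)
      have hfull : ((X : (ZMod p)[X]) ^ n + 1) ∣ reflect (n - 1) (toPoly p n b) := by
        rw [hgs]
        exact hcop.mul_dvd hg_refl hgs_dvd
      have hrefl0 : reflect (n - 1) (toPoly p n b) = 0 :=
        aux_eq_zero_of_dvd _ (fun m hm => aux_coeff_reflect_ge p n hn b m hm) hfull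
      exfalso
      apply hB0
      apply Polynomial.ext
      intro i
      have h17 : (toPoly p n b).coeff i
          = (reflect (n - 1) (toPoly p n b)).coeff (revAt (n - 1) i) := by
        rw [coeff_reflect, revAt_invol]
      rw [h17, hrefl0]
      simp
  refine ⟨toR p n ag.2, ⟨ag, hagS, ?_⟩, ?_⟩
  · exact Prod.ext hag rfl
  · rintro f' ⟨ab, habS, hab⟩
    have hab1 : toR p n ab.1 = mkR p n g := congrArg Prod.fst hab
    have hab2 : toR p n ab.2 = f' := congrArg Prod.snd hab
    have h1 : ab.1 = ag.1 := aux_toR_inj p n hn (by rw [hab1, hag])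
    have hzmem : (((0 : Fin n → ZMod p), ag.2 - ab.2)
        : (Fin n → ZMod p) × (Fin n → ZMod p)) ∈ S := by
      have hs := S.sub_mem hagS habS
      have he : ag - ab = (((0 : Fin n → ZMod p), ag.2 - ab.2)
          : (Fin n → ZMod p) × (Fin n → ZMod p)) := by
        have : ag - ab = (ag.1 - ab.1, ag.2 - ab.2) := rfl
        rw [this, h1, sub_self]
      rwa [he] at hs
    have hzz : ag.2 - ab.2 = 0 := hker _ hzmem
    have : ab.2 = ag.2 := by
      have := sub_eq_zero.mp hzz
      exact this.symm
    rw [← hab2, this]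
end RpnLemmas
end
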